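/- Let X, Y be real symmetric n×n matrices and ζ, η ∈ ℝⁿ. Then det(λI − X − tζζᵀ) = det(λI − Y − tηηᵀ) for all λ, t ∈ ℝ if and only if there exists a real orthogonal n×n matrix Q with Q X Qᵀ = Y and Q ζ = η. -/

import Mathlib

open Matrix

variable {n : ℕ}

/-- conjugation of vecMulVec -/
lemma conj_vecMulVec (O : Matrix (Fin n) (Fin n) ℝ) (a b : Fin n → ℝ) :
    O * vecMulVec a b * Oᵀ = vecMulVec (O *ᵥ a) (O *ᵥ b) := by
  rw [vecMulVec_eq Unit, vecMulVec_eq Unit, replicateCol_mulVec, replicateRow_mulVec, transpose_mul,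
    transpose_replicateCol, Matrix.mul_assoc, Matrix.mul_assoc, Matrix.mul_assoc]

/-- spectral decomposition of a real symmetric matrix -/
lemma symm_spectral {X : Matrix (Fin n) (Fin n) ℝ} (h : X.IsSymm) :
    ∃ (O : Matrix (Fin n) (Fin n) ℝ) (d : Fin n → ℝ),
      Oᵀ * O = 1 ∧ O * Oᵀ = 1 ∧ X = O * diagonal d * Oᵀ := by
  have hH : X.IsHermitian := by
    rwa [Matrix.IsHermitian, conjTranspose_eq_transpose_of_trivial]
  refine ⟨hH.eigenvectorUnitary, hH.eigenvalues, ?_, ?_, ?_⟩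
  · have := (Matrix.mem_unitaryGroup_iff').mp (hH.eigenvectorUnitary).2
    simpa [star_eq_conjTranspose, conjTranspose_eq_transpose_of_trivial] using this
  · have := (Matrix.mem_unitaryGroup_iff).mp (hH.eigenvectorUnitary).2
    simpa [star_eq_conjTranspose, conjTranspose_eq_transpose_of_trivial] using this
  · have := hH.spectral_theorem
    simpa [star_eq_conjTranspose, conjTranspose_eq_transpose_of_trivial] using this

/-- permuting a diagonalization -/
lemma diag_perm {O : Matrix (Fin n) (Fin n) ℝ} {d : Fin n → ℝ} (σ : Equiv.Perm (Fin n))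
    (h1 : Oᵀ * O = 1) :
    (O.submatrix id ⇑σ)ᵀ * (O.submatrix id ⇑σ) = 1 ∧
    (O.submatrix id ⇑σ) * diagonal (d ∘ ⇑σ) * (O.submatrix id ⇑σ)ᵀ = O * diagonal d * Oᵀ := by
  constructor
  · rw [transpose_submatrix, ← submatrix_mul Oᵀ O ⇑σ id ⇑σ Function.bijective_id, h1,
      submatrix_one_equiv σ]
  · rw [transpose_submatrix, ← submatrix_diagonal_equiv,
      submatrix_mul_equiv O (diagonal d) id σ,
      ← submatrix_mul (O * diagonal d) Oᵀ id ⇑σ id σ.bijective, submatrix_id_id]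

lemma det_resolvent {O : Matrix (Fin n) (Fin n) ℝ} {d : Fin n → ℝ} {ζ : Fin n → ℝ}
    (a : Fin n → ℝ)
    (h1 : Oᵀ * O = 1) (h2 : O * Oᵀ = 1) (hζ : ζ = O *ᵥ a)
    {lam t : ℝ} (hlam : ∀ i, lam - d i ≠ 0) :
    (lam • (1 : Matrix (Fin n) (Fin n) ℝ) - O * diagonal d * Oᵀ - t • vecMulVec ζ ζ).det
      = (∏ i, (lam - d i)) * (1 - t * ∑ i, a i ^ 2 / (lam - d i)) := by
  set v : Fin n → ℝ := fun i => lam - d i with hv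
  set w : Fin n → ℝ := fun i => a i / v i with hw
  have key : lam • (1 : Matrix (Fin n) (Fin n) ℝ) - O * diagonal d * Oᵀ - t • vecMulVec ζ ζ
      = O * (lam • (1 : Matrix (Fin n) (Fin n) ℝ) - diagonal d - t • vecMulVec a a) * Oᵀ := by
    rw [Matrix.mul_sub, Matrix.sub_mul, Matrix.mul_sub, Matrix.sub_mul,
      Matrix.mul_smul, Matrix.mul_one, Matrix.smul_mul, h2,
      Matrix.mul_smul, Matrix.smul_mul, conj_vecMulVec, ← hζ]
  have hM : lam • (1 : Matrix (Fin n) (Fin n) ℝ) - diagonal d - t • vecMulVec a a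
      = diagonal v * (1 - t • vecMulVec w a) := by
    have hdvw : diagonal v * vecMulVec w a = vecMulVec a a := by
      ext i j
      rw [diagonal_mul, vecMulVec_apply, vecMulVec_apply, hw, ← mul_assoc,
        mul_div_cancel₀ _ (hlam i)]
    rw [Matrix.mul_sub, Matrix.mul_one, Matrix.mul_smul, hdvw]
    congr 1
    rw [smul_one_eq_diagonal, ← diagonal_sub]
  have hcr : (1 : Matrix (Fin n) (Fin n) ℝ) - t • vecMulVec w a
      = 1 + replicateCol Unit ((-t) • w) * replicateRow Unit a := by
    rw [replicateCol_smul, Matrix.smul_mul, ← vecMulVec_eq Unit, neg_smul, ← sub_eq_add_neg]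
  have hOdet : Oᵀ.det * O.det = 1 := by rw [← det_mul, h1, det_one]
  rw [key, det_mul, det_mul, hM, det_mul, hcr, det_one_add_replicateCol_mul_replicateRow, det_diagonal,
    dotProduct_smul]
  have : a ⬝ᵥ w = ∑ i, a i ^ 2 / (lam - d i) := by
    simp only [dotProduct, hw, hv]
    exact Finset.sum_congr rfl fun i _ => by rw [pow_two, mul_div_assoc]
  rw [this]
  have hprod : ∏ i, v i = ∏ i, (lam - d i) := rfl
  rw [hprod]
  simp only [smul_eq_mul]
  linear_combination ((∏ i, (lam - d i)) * (1 + -t * ∑ i, a i ^ 2 / (lam - d i))) * hOdet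

lemma perm_of_prod_eq {d e : Fin n → ℝ} {M : ℝ}
    (h : ∀ lam, M < lam → ∏ i, (lam - d i) = ∏ i, (lam - e i)) :
    ∃ σ : Equiv.Perm (Fin n), d = e ∘ ⇑σ := by
  classical
  set p : Polynomial ℝ := ∏ i, (Polynomial.X - Polynomial.C (d i)) with hp
  set q : Polynomial ℝ := ∏ i, (Polynomial.X - Polynomial.C (e i)) with hq
  have hev : ∀ lam, M < lam → (p - q).eval lam = 0 := by
    intro lam hl
    simp only [Polynomial.eval_sub, hp, hq, Polynomial.eval_prod, Polynomial.eval_X,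
      Polynomial.eval_C]
    rw [h lam hl, sub_self]
  have hpq : p = q := by
    have h0 : p - q = 0 := by
      apply Polynomial.eq_zero_of_infinite_isRoot
      apply Set.Infinite.mono (s := Set.Ioi M)
      · intro x hx
        exact hev x hx
      · exact Set.Ioi_infinite M
    exact sub_eq_zero.mp h0
  have hroots : (Finset.univ.val.map d) = (Finset.univ.val.map e) := by
    have rd : p.roots = Finset.univ.val.map d := by
      rw [hp, Finset.prod_eq_multiset_prod]
      have := Polynomial.roots_multiset_prod_X_sub_C (Finset.univ.val.map d)
      rwa [Multiset.map_map, Function.comp_def] at this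
    have re : q.roots = Finset.univ.val.map e := by
      rw [hq, Finset.prod_eq_multiset_prod]
      have := Polynomial.roots_multiset_prod_X_sub_C (Finset.univ.val.map e)
      rwa [Multiset.map_map, Function.comp_def] at this
    rw [← rd, ← re, hpq]
  have hperm : (List.ofFn d).Perm (List.ofFn e) := by
    rw [← Multiset.coe_eq_coe]
    simpa [Fin.univ_val_map] using hroots
  have hsorted : d ∘ ⇑(Tuple.sort d) = e ∘ ⇑(Tuple.sort e) := by
    apply List.ofFn_injective
    refine List.Perm.eq_of_sortedLE (Tuple.monotone_sort d).sortedLE_ofFn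
      (Tuple.monotone_sort e).sortedLE_ofFn ?_
    exact ((Tuple.sort d).ofFn_comp_perm d).trans
      (hperm.trans ((Tuple.sort e).ofFn_comp_perm e).symm)
  refine ⟨(Tuple.sort d).symm.trans (Tuple.sort e), funext fun i => ?_⟩
  have := congrFun hsorted ((Tuple.sort d).symm i)
  simpa using this

lemma fiber_sum_eq_zero {d c : Fin n → ℝ} {M : ℝ} (hM : ∀ i, d i ≤ M)
    (h : ∀ lam, M < lam → ∑ i, c i / (lam - d i) = 0) (μ : ℝ) :
    ∑ i ∈ Finset.univ.filter (fun i => d i = μ), c i = 0 := by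
  classical
  set V : Finset ℝ := Finset.univ.image d with hV
  by_cases hμ : μ ∈ V
  case neg =>
    have : Finset.univ.filter (fun i => d i = μ) = ∅ := by
      apply Finset.filter_eq_empty_iff.mpr
      intro i _ hdi
      exact hμ (hdi ▸ Finset.mem_image_of_mem d (Finset.mem_univ i))
    rw [this, Finset.sum_empty]
  case pos =>
    set C : ℝ → ℝ := fun ν => ∑ i ∈ Finset.univ.filter (fun i => d i = ν), c i with hC
    have hne : ∀ ν ∈ V, ∀ lam, M < lam → lam - ν ≠ 0 := by
      intro ν hν lam hl
      obtain ⟨i, _, rfl⟩ := Finset.mem_image.mp hν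
      have := hM i
      linarith
    have step1 : ∀ lam, M < lam → ∑ ν ∈ V, C ν / (lam - ν) = 0 := by
      intro lam hl
      rw [← h lam hl]
      rw [← Finset.sum_fiberwise_of_maps_to (g := d) (t := V)
        (fun i _ => Finset.mem_image_of_mem d (Finset.mem_univ i))
        (fun i => c i / (lam - d i))]
      apply Finset.sum_congr rfl
      intro ν hν
      rw [hC, Finset.sum_div]
      apply Finset.sum_congr rfl
      intro i hi
      rw [(Finset.mem_filter.mp hi).2]
    set p : Polynomial ℝ :=
      ∑ ν ∈ V, Polynomial.C (C ν) * ∏ ρ ∈ V.erase ν, (Polynomial.X - Polynomial.C ρ) with hp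
    have hpz : p = 0 := by
      apply Polynomial.eq_zero_of_infinite_isRoot
      apply Set.Infinite.mono (s := Set.Ioi M) ?_ (Set.Ioi_infinite M)
      intro lam hl
      have hl' : M < lam := hl
      show p.eval lam = 0
      have : p.eval lam = (∏ ρ ∈ V, (lam - ρ)) * ∑ ν ∈ V, C ν / (lam - ν) := by
        rw [hp]
        simp only [Polynomial.eval_finset_sum, Polynomial.eval_mul, Polynomial.eval_C,
          Polynomial.eval_prod, Polynomial.eval_sub, Polynomial.eval_X, Finset.mul_sum]
        apply Finset.sum_congr rfl
        intro ν hν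
        rw [← Finset.mul_prod_erase V _ hν]
        have hnz := hne ν hν lam hl'
        field_simp
      rw [this, step1 lam hl', mul_zero]
    have heval := congrArg (Polynomial.eval μ) hpz
    rw [hp] at heval
    simp only [Polynomial.eval_finset_sum, Polynomial.eval_mul, Polynomial.eval_C,
      Polynomial.eval_prod, Polynomial.eval_sub, Polynomial.eval_X, Polynomial.eval_zero] at heval
    rw [Finset.sum_eq_single μ] at heval
    · have hprodne : ∏ ρ ∈ V.erase μ, (μ - ρ) ≠ 0 := by
        rw [Finset.prod_ne_zero_iff]
        intro ρ hρ
        have := (Finset.mem_erase.mp hρ).1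
        intro hc
        exact this (by linarith)
      exact (mul_eq_zero.mp heval).resolve_right hprodne
    · intro ν hν hνμ
      apply mul_eq_zero_of_right
      exact Finset.prod_eq_zero (Finset.mem_erase.mpr ⟨hνμ.symm, hμ⟩) (sub_self μ)
    · intro hcon
      exact absurd hμ hcon

lemma householder (d a b : Fin n → ℝ)
    (h : ∀ μ : ℝ, ∑ i ∈ Finset.univ.filter (fun i => d i = μ), (a i)^2
               = ∑ i ∈ Finset.univ.filter (fun i => d i = μ), (b i)^2) :
    ∃ W : Matrix (Fin n) (Fin n) ℝ,
      Wᵀ * W = 1 ∧ W * diagonal d = diagonal d * W ∧ W *ᵥ a = b := by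
  classical
  set u : Fin n → ℝ := fun i => a i - b i with hu
  set N : ℝ → ℝ := fun μ => ∑ i ∈ Finset.univ.filter (fun i => d i = μ), (u i)^2 with hN
  set F : Matrix (Fin n) (Fin n) ℝ :=
    Matrix.of (fun i j => if d i = d j then 2 * u i * u j / N (d i) else 0) with hF
  have f0 : ∀ i, N (d i) = 0 → u i = 0 := by
    intro i hNi
    have hmem : i ∈ Finset.univ.filter (fun j => d j = d i) := by simp
    have := (Finset.sum_eq_zero_iff_of_nonneg (fun j _ => sq_nonneg (u j))).mp hNi i hmem
    exact sq_eq_zero_iff.mp this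
  have f1 : ∀ μ, ∑ i ∈ Finset.univ.filter (fun i => d i = μ), u i * a i = N μ / 2 := by
    intro μ
    have e1 : ∑ i ∈ Finset.univ.filter (fun i => d i = μ), (u i * a i)
        - ∑ i ∈ Finset.univ.filter (fun i => d i = μ), (u i * b i) = N μ := by
      rw [← Finset.sum_sub_distrib, hN]
      exact Finset.sum_congr rfl fun i _ => by simp only [hu]; ring
    have e2 : ∑ i ∈ Finset.univ.filter (fun i => d i = μ), (u i * a i)
        + ∑ i ∈ Finset.univ.filter (fun i => d i = μ), (u i * b i) = 0 := by
      rw [← Finset.sum_add_distrib]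
      have e3 : ∑ i ∈ Finset.univ.filter (fun i => d i = μ), (u i * a i + u i * b i)
          = ∑ i ∈ Finset.univ.filter (fun i => d i = μ), ((a i)^2 - (b i)^2) :=
        Finset.sum_congr rfl fun i _ => by simp only [hu]; ring
      rw [e3, Finset.sum_sub_distrib, h μ, sub_self]
    linarith
  have hFsymm : Fᵀ = F := by
    ext i j
    simp only [transpose_apply, hF, Matrix.of_apply]
    by_cases hij : d i = d j
    · rw [if_pos hij.symm, if_pos hij, hij]; ring
    · rw [if_neg (fun hc => hij hc.symm), if_neg hij]
  have hFF : F * F = F + F := by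
    ext i k
    rw [Matrix.mul_apply, Matrix.add_apply]
    by_cases hik : d i = d k
    · have hsum : ∀ j, F i j * F j k
          = if d j = d i then (4 * u i * u k) * ((u j)^2 / (N (d i))^2) else 0 := by
        intro j
        simp only [hF, Matrix.of_apply]
        by_cases hij : d j = d i
        · rw [if_pos hij, if_pos hij.symm, if_pos (hij.trans hik), hij]
          ring
        · rw [if_neg hij, if_neg (fun hc => hij hc.symm), zero_mul]
      rw [Finset.sum_congr rfl (fun j _ => hsum j), ← Finset.sum_filter, ← Finset.mul_sum,
        ← Finset.sum_div]
      have hNdef : ∑ j ∈ Finset.univ.filter (fun j => d j = d i), (u j)^2 = N (d i) := rfl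
      rw [hNdef]
      simp only [hF, Matrix.of_apply, if_pos hik]
      by_cases hN0 : N (d i) = 0
      · rw [hN0, f0 i hN0]; simp
      · field_simp; ring
    · have hsum : ∀ j, F i j * F j k = 0 := by
        intro j
        simp only [hF, Matrix.of_apply]
        by_cases hij : d j = d i
        · rw [if_neg (fun hc => hik (hij.symm.trans hc)), mul_zero]
        · rw [if_neg (fun hc => hij hc.symm), zero_mul]
      rw [Finset.sum_congr rfl (fun j _ => hsum j)]
      simp only [hF, Matrix.of_apply, if_neg hik]
      simp
  have hFcomm : F * diagonal d = diagonal d * F := by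
    ext i j
    rw [mul_diagonal, diagonal_mul]
    simp only [hF, Matrix.of_apply]
    by_cases hij : d i = d j
    · rw [if_pos hij, hij]; ring
    · rw [if_neg hij, zero_mul, mul_zero]
  have hFa : F *ᵥ a = fun i => u i := by
    funext i
    rw [mulVec, dotProduct]
    have hsum : ∀ j, F i j * a j
        = if d j = d i then (2 * u i / N (d i)) * (u j * a j) else 0 := by
      intro j
      simp only [hF, Matrix.of_apply]
      by_cases hij : d j = d i
      · rw [if_pos hij, if_pos hij.symm]; ring
      · rw [if_neg hij, if_neg (fun hc => hij hc.symm), zero_mul]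
    rw [Finset.sum_congr rfl (fun j _ => hsum j), ← Finset.sum_filter, ← Finset.mul_sum,
      f1 (d i)]
    by_cases hN0 : N (d i) = 0
    · rw [hN0, f0 i hN0]; simp
    · field_simp
  refine ⟨1 - F, ?_, ?_, ?_⟩
  · have hWt : (1 - F)ᵀ = 1 - F := by rw [transpose_sub, transpose_one, hFsymm]
    rw [hWt, Matrix.mul_sub, Matrix.sub_mul, Matrix.sub_mul, Matrix.mul_one, Matrix.one_mul,
      hFF, Matrix.mul_one]
    abel
  · rw [Matrix.sub_mul, Matrix.mul_sub, Matrix.one_mul, Matrix.mul_one, hFcomm]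
  · rw [Matrix.sub_mulVec, Matrix.one_mulVec, hFa]
    funext i
    simp only [Pi.sub_apply, hu]
    ring

/-- **Lemma (Johnson–Newman type characterization).** Real symmetric pairs `(X, ζ)` and `(Y, η)`
are Φ-cospectral, i.e. `det(λI − X − tζζᵀ) = det(λI − Y − tηηᵀ)` for all real `λ, t`, if and
only if there exists an orthogonal matrix `Q` with `Q X Qᵀ = Y` and `Q ζ = η`. -/
theorem phi_cospectral_iff_orthogonal
    {n : ℕ} (X Y : Matrix (Fin n) (Fin n) ℝ) (ζ η : Fin n → ℝ)
    (hXsymm : X.IsSymm) (hYsymm : Y.IsSymm) :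
    (∀ lam t : ℝ,
      (lam • (1 : Matrix (Fin n) (Fin n) ℝ) - X - t • vecMulVec ζ ζ).det =
      (lam • (1 : Matrix (Fin n) (Fin n) ℝ) - Y - t • vecMulVec η η).det) ↔
    (∃ Q : Matrix (Fin n) (Fin n) ℝ, Qᵀ * Q = 1 ∧ Q * X * Qᵀ = Y ∧ Q *ᵥ ζ = η) := by
  classical
  constructor
  · intro hyp
    obtain ⟨U, dX, hU1, hU2, hXd⟩ := symm_spectral hXsymm
    obtain ⟨V0, dY, hV01, hV02, hYd⟩ := symm_spectral hYsymm
    obtain ⟨M0, hM0⟩ := Finset.exists_le ((Finset.univ.image dX) ∪ (Finset.univ.image dY))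
    have hMX : ∀ i, dX i ≤ M0 := fun i => hM0 _
      (Finset.mem_union_left _ (Finset.mem_image_of_mem dX (Finset.mem_univ i)))
    have hMY : ∀ i, dY i ≤ M0 := fun i => hM0 _
      (Finset.mem_union_right _ (Finset.mem_image_of_mem dY (Finset.mem_univ i)))
    set av : Fin n → ℝ := Uᵀ *ᵥ ζ with hav
    have hζa : ζ = U *ᵥ av := by rw [hav, mulVec_mulVec, hU2, one_mulVec]
    have hζa0 : ζ = V0 *ᵥ (V0ᵀ *ᵥ ζ) := by rw [mulVec_mulVec, hV02, one_mulVec]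
    have hηb0 : η = V0 *ᵥ (V0ᵀ *ᵥ η) := by rw [mulVec_mulVec, hV02, one_mulVec]
    -- characteristic polynomials agree
    have hchar : ∀ lam, M0 < lam → ∏ i, (lam - dX i) = ∏ i, (lam - dY i) := by
      intro lam hl
      have hneX : ∀ i, lam - dX i ≠ 0 := fun i =>
        sub_ne_zero_of_ne (lt_of_le_of_lt (hMX i) hl).ne'
      have hneY : ∀ i, lam - dY i ≠ 0 := fun i =>
        sub_ne_zero_of_ne (lt_of_le_of_lt (hMY i) hl).ne'
      have h0 := hyp lam 0
      rw [hXd, hYd, det_resolvent av hU1 hU2 hζa hneX,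
        det_resolvent (V0ᵀ *ᵥ η) hV01 hV02 hηb0 hneY] at h0
      simpa using h0
    obtain ⟨σ, hσ⟩ := perm_of_prod_eq hchar
    obtain ⟨hV1, hV2eq⟩ := diag_perm (d := dY) σ hV01
    set V : Matrix (Fin n) (Fin n) ℝ := V0.submatrix id ⇑σ with hVdef
    have hV2 : V * Vᵀ = 1 := mul_eq_one_comm.mp hV1
    have hYd' : Y = V * diagonal dX * Vᵀ := by
      rw [hYd, ← hV2eq, hσ]
    set bv : Fin n → ℝ := Vᵀ *ᵥ η with hbv
    have hηb : η = V *ᵥ bv := by rw [hbv, mulVec_mulVec, hV2, one_mulVec]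
    -- resolvent identity
    have hres : ∀ lam, M0 < lam → ∑ i, ((av i)^2 - (bv i)^2) / (lam - dX i) = 0 := by
      intro lam hl
      have hne : ∀ i, lam - dX i ≠ 0 := fun i =>
        sub_ne_zero_of_ne (lt_of_le_of_lt (hMX i) hl).ne'
      have h1 := hyp lam 1
      rw [hXd, hYd', det_resolvent av hU1 hU2 hζa hne,
        det_resolvent bv hV1 hV2 hηb hne] at h1
      have hprodne : (∏ i, (lam - dX i)) ≠ 0 :=
        Finset.prod_ne_zero_iff.mpr (fun i _ => hne i)
      have h2 := mul_left_cancel₀ hprodne h1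
      have h3 : ∑ i, (av i)^2/(lam - dX i) = ∑ i, (bv i)^2/(lam - dX i) := by
        simp only [one_mul] at h2
        linarith
      rw [show (fun i => ((av i)^2 - (bv i)^2) / (lam - dX i))
          = fun i => (av i)^2/(lam - dX i) - (bv i)^2/(lam - dX i) from
          funext fun i => sub_div _ _ _]
      rw [Finset.sum_sub_distrib, h3, sub_self]
    have hfib := fiber_sum_eq_zero hMX hres
    have hfib' : ∀ μ : ℝ, ∑ i ∈ Finset.univ.filter (fun i => dX i = μ), (av i)^2
        = ∑ i ∈ Finset.univ.filter (fun i => dX i = μ), (bv i)^2 := by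
      intro μ
      have := hfib μ
      rw [Finset.sum_sub_distrib] at this
      linarith
    obtain ⟨W, hW1, hWcomm, hWa⟩ := householder dX av bv hfib'
    have hWWt : W * Wᵀ = 1 := mul_eq_one_comm.mp hW1
    have hWdWt : W * diagonal dX * Wᵀ = diagonal dX := by
      rw [hWcomm, Matrix.mul_assoc, hWWt, Matrix.mul_one]
    refine ⟨V * W * Uᵀ, ?_, ?_, ?_⟩
    · rw [transpose_mul, transpose_mul, transpose_transpose]
      simp only [Matrix.mul_assoc]
      rw [show Vᵀ * (V * (W * Uᵀ)) = W * Uᵀ from by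
        rw [← Matrix.mul_assoc, hV1, Matrix.one_mul]]
      rw [show Wᵀ * (W * Uᵀ) = Uᵀ from by
        rw [← Matrix.mul_assoc, hW1, Matrix.one_mul]]
      exact hU2
    · rw [hXd, transpose_mul, transpose_mul, transpose_transpose]
      simp only [Matrix.mul_assoc]
      rw [show Uᵀ * (U * (diagonal dX * (Uᵀ * (U * (Wᵀ * Vᵀ)))))
          = diagonal dX * (Wᵀ * Vᵀ) from by
        rw [← Matrix.mul_assoc, hU1, Matrix.one_mul,
          show Uᵀ * (U * (Wᵀ * Vᵀ)) = Wᵀ * Vᵀ from by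
            rw [← Matrix.mul_assoc, hU1, Matrix.one_mul]]]
      rw [show W * (diagonal dX * (Wᵀ * Vᵀ)) = diagonal dX * Vᵀ from by
        rw [← Matrix.mul_assoc, ← Matrix.mul_assoc, hWdWt]]
      rw [← Matrix.mul_assoc, ← hYd']
    · rw [← mulVec_mulVec, ← mulVec_mulVec, ← hav, hWa, ← hηb]
  · rintro ⟨Q, hQ1, hQX, hQζ⟩
    intro lam t
    have hQ2 : Q * Qᵀ = 1 := mul_eq_one_comm.mp hQ1
    have e1 : Q * (lam • (1 : Matrix (Fin n) (Fin n) ℝ)) * Qᵀ = lam • 1 := by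
      rw [Matrix.mul_smul, Matrix.mul_one, Matrix.smul_mul, hQ2]
    have e2 : Q * (t • vecMulVec ζ ζ) * Qᵀ = t • vecMulVec η η := by
      rw [Matrix.mul_smul, Matrix.smul_mul, conj_vecMulVec, hQζ]
    have key : lam • (1 : Matrix (Fin n) (Fin n) ℝ) - Y - t • vecMulVec η η
        = Q * (lam • (1 : Matrix (Fin n) (Fin n) ℝ) - X - t • vecMulVec ζ ζ) * Qᵀ := by
      rw [Matrix.mul_sub, Matrix.sub_mul, Matrix.mul_sub, Matrix.sub_mul, e1, hQX, e2]
    have hdet : Qᵀ.det * Q.det = 1 := by rw [← det_mul, hQ1, det_one]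
    rw [key, det_mul, det_mul]
    linear_combination (-(lam • (1 : Matrix (Fin n) (Fin n) ℝ) - X - t • vecMulVec ζ ζ).det) * hdet
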